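/- The numbers u_n(231) satisfy u_0(231) = u_1(231) = 1 and, for all n ≥ 2, u_n(231) = (Σ_{a+b=n−1} u_a(231)·u_b(231)) − u_{n−2}(231); equivalently, the generating function U(z) = Σ_{n≥0} u_n(231) z^n satisfies U(z) = z·U(z)·(U(z) − z) + 1. -/

import Mathlib

/-- `s` is the index set of an increasing subsequence of the word `f`. -/
def IsIncSubseq {n : ℕ} {α : Type*} [Preorder α] (f : Fin n → α) (s : Finset (Fin n)) : Prop :=
  ∀ i ∈ s, ∀ j ∈ s, i < j → f i < f j

/-- `f` has a unique longest increasing subsequence. -/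
def HasULIS {n : ℕ} {α : Type*} [Preorder α] (f : Fin n → α) : Prop :=
  ∃! s : Finset (Fin n), IsIncSubseq f s ∧
    ∀ t : Finset (Fin n), IsIncSubseq f t → t.card ≤ s.card

/-- `p` contains the pattern `q`. -/
def Contains {k n : ℕ} (q : Equiv.Perm (Fin k)) (p : Equiv.Perm (Fin n)) : Prop :=
  ∃ f : Fin k → Fin n, StrictMono f ∧ ∀ a b : Fin k, p (f a) < p (f b) ↔ q a < q b

/-- `p` avoids the pattern `q`. -/
def Avoids {k n : ℕ} (q : Equiv.Perm (Fin k)) (p : Equiv.Perm (Fin n)) : Prop :=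
  ¬ Contains q p

def pattern321 : Equiv.Perm (Fin 3) := ⟨![2,1,0], ![2,1,0], by decide, by decide⟩
def pattern231 : Equiv.Perm (Fin 3) := ⟨![1,2,0], ![2,0,1], by decide, by decide⟩
def pattern132 : Equiv.Perm (Fin 3) := ⟨![0,2,1], ![0,2,1], by decide, by decide⟩
def pattern123 : Equiv.Perm (Fin 3) := Equiv.refl (Fin 3)

/-- the number of `q`-avoiding permutations of length `n` with a unique
longest increasing subsequence. -/
noncomputable def uNum {k : ℕ} (q : Equiv.Perm (Fin k)) (n : ℕ) : ℕ :=
  Nat.card {p : Equiv.Perm (Fin n) // Avoids q p ∧ HasULIS ⇑p}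

/-- the number of `q`-avoiding involutions of length `n` with a unique
longest increasing subsequence. -/
noncomputable def iNum {k : ℕ} (q : Equiv.Perm (Fin k)) (n : ℕ) : ℕ :=
  Nat.card {p : Equiv.Perm (Fin n) // p⁻¹ = p ∧ Avoids q p ∧ HasULIS ⇑p}

/-- A permutation is indecomposable if it cannot be cut into a (nonempty) prefix and
a (nonempty) suffix so that every entry of the prefix is smaller than every entry
of the suffix. -/
def Indecomposable {m : ℕ} (w : Equiv.Perm (Fin m)) : Prop :=
  ¬ ∃ j : ℕ, 1 ≤ j ∧ j < m ∧ ∀ a b : Fin m, (a : ℕ) < j → j ≤ (b : ℕ) → w a < w b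
open Finset Equiv

namespace U231

/-! ### Generic lemmas about increasing subsequences -/

lemma inc_empty {n : ℕ} {A : Type*} [Preorder A] (f : Fin n → A) :
    IsIncSubseq f (∅ : Finset (Fin n)) := by
  intro i hi; simp at hi

lemma inc_singleton {n : ℕ} {A : Type*} [Preorder A] (f : Fin n → A) (i : Fin n) :
    IsIncSubseq f {i} := by
  intro x hx y hy hxy
  simp only [Finset.mem_singleton] at hx hy
  subst hx; subst hy; exact absurd hxy (lt_irrefl _)

lemma inc_pair {n : ℕ} {A : Type*} [Preorder A] {f : Fin n → A} {i j : Fin n}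
    (hij : i < j) (hf : f i < f j) : IsIncSubseq f ({i, j} : Finset (Fin n)) := by
  intro x hx y hy hxy
  simp only [Finset.mem_insert, Finset.mem_singleton] at hx hy
  rcases hx with rfl | rfl <;> rcases hy with rfl | rfl
  · exact absurd hxy (lt_irrefl _)
  · exact hf
  · exact absurd hij (not_lt.mpr hxy.le)
  · exact absurd hxy (lt_irrefl _)

/-- from an increasing set of size ≥ 2 we get an increasing pair -/
lemma exists_pair_of_inc {n : ℕ} {A : Type*} [LinearOrder A] {f : Fin n → A}
    {s : Finset (Fin n)} (hs : IsIncSubseq f s) (h2 : 2 ≤ s.card) :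
    ∃ i j : Fin n, i < j ∧ f i < f j := by
  obtain ⟨x, hx, y, hy, hxy⟩ := Finset.one_lt_card.mp h2
  rcases lt_or_gt_of_ne hxy with h | h
  · exact ⟨x, y, h, hs x hx y hy h⟩
  · exact ⟨y, x, h, hs y hy x hx h⟩

end U231
namespace U231

/-! ### The glued structure -/

section Glue

variable {a b : ℕ}

def posL (a b : ℕ) (i : Fin a) : Fin (a+1+b) := ⟨i, by have := i.2; omega⟩
def posM (a b : ℕ) : Fin (a+1+b) := ⟨a, by omega⟩
def posR (a b : ℕ) (j : Fin b) : Fin (a+1+b) := ⟨a+1+j, by have := j.2; omega⟩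

lemma posL_injective : Function.Injective (posL a b) := by
  intro i j h; exact Fin.ext (by simpa [posL, Fin.ext_iff] using h)

lemma posR_injective : Function.Injective (posR a b) := by
  intro i j h; simp only [posR, Fin.ext_iff] at h; exact Fin.ext (by omega)

/-- A permutation of `Fin (a+1+b)` is glued from `α` and `β` with the maximum in
the middle. -/
structure Glued (p : Equiv.Perm (Fin (a+1+b))) (α : Equiv.Perm (Fin a))
    (β : Equiv.Perm (Fin b)) : Prop where
  hL : ∀ i : Fin a, (p (posL a b i) : ℕ) = α i
  hM : (p (posM a b) : ℕ) = a + b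
  hR : ∀ j : Fin b, (p (posR a b j) : ℕ) = a + β j

variable {p : Equiv.Perm (Fin (a+1+b))} {α : Equiv.Perm (Fin a)} {β : Equiv.Perm (Fin b)}

/-- trichotomy for positions -/
lemma pos_trichotomy (x : Fin (a+1+b)) :
    (∃ i : Fin a, x = posL a b i) ∨ x = posM a b ∨ ∃ j : Fin b, x = posR a b j := by
  rcases lt_trichotomy (x : ℕ) a with h | h | h
  · exact Or.inl ⟨⟨x, h⟩, Fin.ext rfl⟩
  · exact Or.inr (Or.inl (Fin.ext h))
  · refine Or.inr (Or.inr ⟨⟨(x : ℕ) - (a+1), by have := x.2; omega⟩, Fin.ext ?_⟩)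
    simp only [posR]; omega

section SetOps

def downL (s : Finset (Fin (a+1+b))) : Finset (Fin a) :=
  Finset.univ.filter (fun i => posL a b i ∈ s)

def downR (s : Finset (Fin (a+1+b))) : Finset (Fin b) :=
  Finset.univ.filter (fun j => posR a b j ∈ s)

lemma mem_downL {s : Finset (Fin (a+1+b))} {i : Fin a} :
    i ∈ downL s ↔ posL a b i ∈ s := by simp [downL]

lemma mem_downR {s : Finset (Fin (a+1+b))} {j : Fin b} :
    j ∈ downR s ↔ posR a b j ∈ s := by simp [downR]

lemma downL_image_L (s₁ : Finset (Fin a)) (s₂ : Finset (Fin b)) :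
    downL (s₁.image (posL a b) ∪ s₂.image (posR a b)) = s₁ := by
  ext i
  simp only [mem_downL, Finset.mem_union, Finset.mem_image]
  constructor
  · rintro (⟨i', hi', h⟩ | ⟨j, hj, h⟩)
    · rwa [← posL_injective h]
    · exfalso; simp only [posL, posR, Fin.ext_iff] at h; omega
  · intro h; exact Or.inl ⟨i, h, rfl⟩

lemma downR_image_R (s₁ : Finset (Fin a)) (s₂ : Finset (Fin b)) :
    downR (s₁.image (posL a b) ∪ s₂.image (posR a b)) = s₂ := by
  ext j
  simp only [mem_downR, Finset.mem_union, Finset.mem_image]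
  constructor
  · rintro (⟨i, hi, h⟩ | ⟨j', hj', h⟩)
    · exfalso; simp only [posL, posR, Fin.ext_iff] at h; have := i.2; omega
    · rwa [← posR_injective h]
  · intro h; exact Or.inr ⟨j, h, rfl⟩

lemma posM_not_mem_image (s₁ : Finset (Fin a)) (s₂ : Finset (Fin b)) :
    posM a b ∉ s₁.image (posL a b) ∪ s₂.image (posR a b) := by
  simp only [Finset.mem_union, Finset.mem_image, not_or, not_exists]
  constructor
  · rintro i ⟨-, h⟩; simp only [posL, posM, Fin.ext_iff] at h; have := i.2; omega
  · rintro j ⟨-, h⟩; simp only [posR, posM, Fin.ext_iff] at h; omega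

lemma downL_insertM (s : Finset (Fin (a+1+b))) : downL (insert (posM a b) s) = downL s := by
  ext i; simp only [mem_downL, Finset.mem_insert]
  have : posL a b i ≠ posM a b := by
    simp only [posL, posM, ne_eq, Fin.mk.injEq]; have := i.2; omega
  tauto

lemma downR_insertM (s : Finset (Fin (a+1+b))) : downR (insert (posM a b) s) = downR s := by
  ext j; simp only [mem_downR, Finset.mem_insert]
  have : posR a b j ≠ posM a b := by simp only [posR, posM, ne_eq, Fin.mk.injEq]; omega
  tauto

/-- extensionality for sets of positions -/
lemma set_ext {s t : Finset (Fin (a+1+b))} (h1 : downL s = downL t) (h2 : downR s = downR t)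
    (h3 : posM a b ∈ s ↔ posM a b ∈ t) : s = t := by
  ext x
  rcases pos_trichotomy x with ⟨i, rfl⟩ | rfl | ⟨j, rfl⟩
  · rw [← mem_downL, ← mem_downL, h1]
  · exact h3
  · rw [← mem_downR, ← mem_downR, h2]

lemma card_eq (s : Finset (Fin (a+1+b))) :
    s.card = (downL s).card + (downR s).card + (if posM a b ∈ s then 1 else 0) := by
  classical
  have hs : s = (downL s).image (posL a b) ∪ (downR s).image (posR a b)
      ∪ (if posM a b ∈ s then {posM a b} else ∅) := by
    ext x
    rcases pos_trichotomy x with ⟨i, rfl⟩ | rfl | ⟨j, rfl⟩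
    · simp only [Finset.mem_union, Finset.mem_image]
      constructor
      · intro h; exact Or.inl (Or.inl ⟨i, mem_downL.mpr h, rfl⟩)
      · rintro ((⟨i', h, he⟩ | ⟨j, h, he⟩) | h)
        · rw [← posL_injective he]; exact mem_downL.mp h
        · exfalso; simp only [posL, posR, Fin.ext_iff] at he; have := i.2; omega
        · exfalso; split at h <;> simp only [Finset.mem_singleton, Finset.notMem_empty] at h
          simp only [posL, posM, Fin.ext_iff] at h; have := i.2; omega
    · simp only [Finset.mem_union, Finset.mem_image]
      constructor
      · intro h; simp [h]
      · rintro ((⟨i, h, he⟩ | ⟨j, h, he⟩) | h)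
        · exfalso; simp only [posL, posM, Fin.ext_iff] at he; have := i.2; omega
        · exfalso; simp only [posR, posM, Fin.ext_iff] at he; omega
        · split at h <;> simp only [Finset.mem_singleton, Finset.notMem_empty] at h
          · assumption
    · simp only [Finset.mem_union, Finset.mem_image]
      constructor
      · intro h; exact Or.inl (Or.inr ⟨j, mem_downR.mpr h, rfl⟩)
      · rintro ((⟨i, h, he⟩ | ⟨j', h, he⟩) | h)
        · exfalso; simp only [posL, posR, Fin.ext_iff] at he; have := i.2; omega
        · rw [← posR_injective he]; exact mem_downR.mp h
        · exfalso; split at h <;> simp only [Finset.mem_singleton, Finset.notMem_empty] at h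
          simp only [posR, posM, Fin.ext_iff] at h; omega
  conv_lhs => rw [hs]
  rw [Finset.card_union_of_disjoint, Finset.card_union_of_disjoint,
    Finset.card_image_of_injective _ posL_injective,
    Finset.card_image_of_injective _ posR_injective]
  · congr 1
    split <;> simp
  · rw [Finset.disjoint_left]
    intro x hx1 hx2
    simp only [Finset.mem_image] at hx1 hx2
    obtain ⟨i, -, rfl⟩ := hx1
    obtain ⟨j, -, he⟩ := hx2
    simp only [posL, posR, Fin.ext_iff] at he; have := i.2; omega
  · rw [Finset.disjoint_right]
    intro x hx
    split at hx <;> simp only [Finset.mem_singleton, Finset.notMem_empty] at hx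
    subst hx; exact posM_not_mem_image _ _

end SetOps

end Glue

end U231
namespace U231

section Glue2

variable {a b : ℕ} {p : Equiv.Perm (Fin (a+1+b))} {α : Equiv.Perm (Fin a)}
  {β : Equiv.Perm (Fin b)}

def MaxInc {n : ℕ} {A : Type*} [Preorder A] (f : Fin n → A) (s : Finset (Fin n)) : Prop :=
  IsIncSubseq f s ∧ ∀ t : Finset (Fin n), IsIncSubseq f t → t.card ≤ s.card

lemma hasULIS_iff {n : ℕ} {A : Type*} [Preorder A] (f : Fin n → A) :
    HasULIS f ↔ ∃! s, MaxInc f s := Iff.rfl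

lemma maxinc_of_card {n : ℕ} {A : Type*} [Preorder A] {f : Fin n → A}
    {s s' : Finset (Fin n)} (hs : MaxInc f s) (h1 : IsIncSubseq f s')
    (h2 : s.card ≤ s'.card) : MaxInc f s' :=
  ⟨h1, fun t ht => le_trans (hs.2 t ht) h2⟩

lemma posL_lt_posL {i j : Fin a} : posL a b i < posL a b j ↔ i < j := by
  simp only [posL, Fin.mk_lt_mk, Fin.lt_def]

lemma posR_lt_posR {i j : Fin b} : posR a b i < posR a b j ↔ i < j := by
  simp only [posR, Fin.mk_lt_mk, Fin.lt_def]; omega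

lemma posL_lt_posM (i : Fin a) : posL a b i < posM a b := by
  simp only [posL, posM, Fin.mk_lt_mk]; exact i.2

lemma posL_lt_posR (i : Fin a) (j : Fin b) : posL a b i < posR a b j := by
  simp only [posL, posR, Fin.mk_lt_mk]; have := i.2; omega

lemma posM_lt_posR (j : Fin b) : posM a b < posR a b j := by
  simp only [posM, posR, Fin.mk_lt_mk]; omega

def glue (s₁ : Finset (Fin a)) (s₂ : Finset (Fin b)) : Finset (Fin (a+1+b)) :=
  s₁.image (posL a b) ∪ s₂.image (posR a b)

def glueM (s₁ : Finset (Fin a)) : Finset (Fin (a+1+b)) :=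
  insert (posM a b) (s₁.image (posL a b))

lemma downL_glue (s₁ : Finset (Fin a)) (s₂ : Finset (Fin b)) : downL (glue s₁ s₂) = s₁ :=
  downL_image_L s₁ s₂

lemma downR_glue (s₁ : Finset (Fin a)) (s₂ : Finset (Fin b)) : downR (glue s₁ s₂) = s₂ :=
  downR_image_R s₁ s₂

lemma posM_not_mem_glue (s₁ : Finset (Fin a)) (s₂ : Finset (Fin b)) :
    posM a b ∉ glue s₁ s₂ := posM_not_mem_image s₁ s₂

lemma card_glue (s₁ : Finset (Fin a)) (s₂ : Finset (Fin b)) :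
    (glue s₁ s₂).card = s₁.card + s₂.card := by
  have := card_eq (glue s₁ s₂)
  rw [downL_glue, downR_glue, if_neg (posM_not_mem_glue s₁ s₂)] at this
  omega

lemma glueM_eq (s₁ : Finset (Fin a)) :
    glueM s₁ = insert (posM a b) (glue s₁ (∅ : Finset (Fin b))) := by
  simp only [glueM, glue, Finset.image_empty, Finset.union_empty]

lemma downL_glueM (s₁ : Finset (Fin a)) : downL (glueM s₁ : Finset (Fin (a+1+b))) = s₁ := by
  rw [glueM_eq, downL_insertM, downL_glue]

lemma downR_glueM (s₁ : Finset (Fin a)) : downR (glueM s₁ : Finset (Fin (a+1+b))) = ∅ := by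
  rw [glueM_eq, downR_insertM, downR_glue]

lemma posM_mem_glueM (s₁ : Finset (Fin a)) : posM a b ∈ glueM s₁ :=
  Finset.mem_insert_self _ _

lemma card_glueM (s₁ : Finset (Fin a)) : (glueM s₁ : Finset (Fin (a+1+b))).card = s₁.card + 1 := by
  have := card_eq (a := a) (b := b) (glueM s₁)
  rw [downL_glueM, downR_glueM, if_pos (posM_mem_glueM s₁)] at this
  simpa using this

/-! ### transfer of the increasing property -/

lemma Glued.inc_downL (hg : Glued p α β) {s : Finset (Fin (a+1+b))}
    (hs : IsIncSubseq ⇑p s) : IsIncSubseq ⇑α (downL s) := by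
  intro i hi j hj hij
  have h := hs _ (mem_downL.mp hi) _ (mem_downL.mp hj) (posL_lt_posL.mpr hij)
  rw [Fin.lt_def] at h ⊢
  rw [hg.hL i, hg.hL j] at h
  exact h

lemma Glued.inc_downR (hg : Glued p α β) {s : Finset (Fin (a+1+b))}
    (hs : IsIncSubseq ⇑p s) : IsIncSubseq ⇑β (downR s) := by
  intro i hi j hj hij
  have h := hs _ (mem_downR.mp hi) _ (mem_downR.mp hj) (posR_lt_posR.mpr hij)
  rw [Fin.lt_def] at h ⊢
  rw [hg.hR i, hg.hR j] at h
  omega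

lemma Glued.downR_empty_of_memM (hg : Glued p α β) {s : Finset (Fin (a+1+b))}
    (hs : IsIncSubseq ⇑p s) (hM : posM a b ∈ s) : downR s = ∅ := by
  rw [Finset.eq_empty_iff_forall_notMem]
  intro j hj
  have h := hs _ hM _ (mem_downR.mp hj) (posM_lt_posR j)
  rw [Fin.lt_def, hg.hM, hg.hR j] at h
  have := (β j).2
  omega

lemma Glued.inc_glue (hg : Glued p α β) {s₁ : Finset (Fin a)} {s₂ : Finset (Fin b)}
    (h₁ : IsIncSubseq ⇑α s₁) (h₂ : IsIncSubseq ⇑β s₂) : IsIncSubseq ⇑p (glue s₁ s₂) := by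
  intro x hx y hy hxy
  simp only [glue, Finset.mem_union, Finset.mem_image] at hx hy
  rcases hx with ⟨i, hi, rfl⟩ | ⟨j, hj, rfl⟩ <;>
    rcases hy with ⟨i', hi', rfl⟩ | ⟨j', hj', rfl⟩
  · have := h₁ _ hi _ hi' (posL_lt_posL.mp hxy)
    rw [Fin.lt_def] at this ⊢
    rw [hg.hL, hg.hL]
    exact this
  · rw [Fin.lt_def, hg.hL, hg.hR]
    have := (α i).2; omega
  · exact absurd (posL_lt_posR i' j) (not_lt.mpr hxy.le)
  · have := h₂ _ hj _ hj' (posR_lt_posR.mp hxy)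
    rw [Fin.lt_def] at this ⊢
    rw [hg.hR, hg.hR]
    omega

lemma Glued.inc_insertM (hg : Glued p α β) {s : Finset (Fin (a+1+b))}
    (hs : IsIncSubseq ⇑p s) (hR : downR s = ∅) :
    IsIncSubseq ⇑p (insert (posM a b) s) := by
  intro x hx y hy hxy
  simp only [Finset.mem_insert] at hx hy
  rcases hx with rfl | hx
  · rcases hy with rfl | hy
    · exact absurd hxy (lt_irrefl _)
    · rcases pos_trichotomy y with ⟨i, rfl⟩ | rfl | ⟨j, rfl⟩
      · exact absurd (posL_lt_posM i) (not_lt.mpr hxy.le)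
      · exact absurd hxy (lt_irrefl _)
      · exact absurd (mem_downR.mpr hy) (by simp [hR])
  · rcases hy with rfl | hy
    · rcases pos_trichotomy x with ⟨i, rfl⟩ | rfl | ⟨j, rfl⟩
      · rw [Fin.lt_def, hg.hL, hg.hM]
        have := (α i).2; omega
      · exact absurd hxy (lt_irrefl _)
      · exact absurd (mem_downR.mpr hx) (by simp [hR])
    · exact hs x hx y hy hxy

lemma Glued.inc_glueM (hg : Glued p α β) {s₁ : Finset (Fin a)}
    (h₁ : IsIncSubseq ⇑α s₁) : IsIncSubseq ⇑p (glueM s₁) := by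
  rw [glueM_eq]
  exact hg.inc_insertM (hg.inc_glue h₁ (inc_empty _)) (by rw [downR_glue])

end Glue2

end U231
namespace U231

section Glue3

variable {a b : ℕ} {p : Equiv.Perm (Fin (a+1+b))} {α : Equiv.Perm (Fin a)}
  {β : Equiv.Perm (Fin b)}

lemma Glued.posM_mem_of_max (hg : Glued p α β) {s : Finset (Fin (a+1+b))}
    (hs : MaxInc ⇑p s) (hre : downR s = ∅) : posM a b ∈ s := by
  by_contra hM
  have h := hs.2 _ (hg.inc_insertM hs.1 hre)
  rw [Finset.card_insert_of_notMem hM] at h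
  omega

lemma downR_of_b0 (hb : b = 0) (t : Finset (Fin (a+1+b))) : downR t = ∅ := by
  subst hb
  rw [Finset.eq_empty_iff_forall_notMem]
  intro j _
  exact absurd j.isLt (by omega)

/-- Case `b = 0` : the ULIS property transfers to `α`. -/
lemma Glued.ulis_case0 (hg : Glued p α β) (hb : b = 0) : HasULIS ⇑p ↔ HasULIS ⇑α := by
  rw [hasULIS_iff, hasULIS_iff]
  constructor
  · rintro ⟨s, hs, hu⟩
    have hre := downR_of_b0 hb s
    have hM : posM a b ∈ s := hg.posM_mem_of_max hs hre
    have hcs := card_eq s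
    rw [hre, if_pos hM, Finset.card_empty] at hcs
    have maxL : MaxInc ⇑α (downL s) := by
      refine ⟨hg.inc_downL hs.1, fun t₁ ht₁ => ?_⟩
      have h := hs.2 _ (hg.inc_glueM ht₁)
      rw [card_glueM] at h
      omega
    refine ⟨downL s, maxL, fun t₁ ht₁ => ?_⟩
    have h1 : MaxInc ⇑p (glueM t₁) := by
      refine maxinc_of_card hs (hg.inc_glueM ht₁.1) ?_
      rw [card_glueM]
      have := ht₁.2 _ maxL.1
      omega
    have he := hu _ h1
    calc t₁ = downL (glueM t₁ : Finset (Fin (a+1+b))) := (downL_glueM t₁).symm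
      _ = downL s := by rw [he]
  · rintro ⟨s₁, h₁, hu₁⟩
    have hmax : MaxInc ⇑p (glueM s₁) := by
      refine ⟨hg.inc_glueM h₁.1, fun t ht => ?_⟩
      have hcs := card_eq t
      rw [downR_of_b0 hb t, Finset.card_empty] at hcs
      have := h₁.2 _ (hg.inc_downL ht)
      rw [card_glueM]
      by_cases hMt : posM a b ∈ t
      · rw [if_pos hMt] at hcs; omega
      · rw [if_neg hMt] at hcs; omega
    refine ⟨glueM s₁, hmax, fun t ht => ?_⟩
    have hre := downR_of_b0 hb t
    have hM : posM a b ∈ t := hg.posM_mem_of_max ht hre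
    have hcs := card_eq t
    rw [hre, if_pos hM, Finset.card_empty] at hcs
    have maxL : MaxInc ⇑α (downL t) := by
      refine ⟨hg.inc_downL ht.1, fun t₁ ht₁ => ?_⟩
      have h := ht.2 _ (hg.inc_glueM ht₁)
      rw [card_glueM] at h
      omega
    have he : downL t = s₁ := hu₁ _ maxL
    refine set_ext ?_ ?_ ?_
    · rw [he, downL_glueM]
    · rw [hre, downR_glueM]
    · simp [hM, posM_mem_glueM]

/-- Case `b ≥ 1` but `β` has no increasing pair : no unique LIS. -/
lemma Glued.ulis_case1 (hg : Glued p α β) (hb : 0 < b)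
    (hno : ¬ ∃ i j : Fin b, i < j ∧ β i < β j) : ¬ HasULIS ⇑p := by
  rw [hasULIS_iff]
  rintro ⟨s, hs, hu⟩
  have hcard1 : ∀ t : Finset (Fin (a+1+b)), IsIncSubseq ⇑p t → (downR t).card ≤ 1 := by
    intro t ht
    by_contra h
    exact hno (exists_pair_of_inc (hg.inc_downR ht) (by omega))
  by_cases hM : posM a b ∈ s
  · have hre := hg.downR_empty_of_memM hs.1 hM
    have hcs := card_eq s
    rw [hre, if_pos hM, Finset.card_empty] at hcs
    have h1 : MaxInc ⇑p (glue (downL s) {⟨0, hb⟩}) := by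
      refine maxinc_of_card hs (hg.inc_glue (hg.inc_downL hs.1) (inc_singleton _ _)) ?_
      rw [card_glue, Finset.card_singleton]
      omega
    have he := hu _ h1
    rw [← he] at hM
    exact posM_not_mem_glue _ _ hM
  · have hcs := card_eq s
    rw [if_neg hM] at hcs
    by_cases hre : downR s = ∅
    · have h := hs.2 _ (hg.inc_insertM hs.1 hre)
      rw [Finset.card_insert_of_notMem hM] at h
      omega
    · have hpos : 1 ≤ (downR s).card := Finset.card_pos.mpr (Finset.nonempty_of_ne_empty hre)
      have h1 : MaxInc ⇑p (glueM (downL s)) := by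
        refine maxinc_of_card hs (hg.inc_glueM (hg.inc_downL hs.1)) ?_
        rw [card_glueM]
        have := hcard1 s hs.1
        omega
      have he := hu _ h1
      rw [← he] at hM
      exact hM (posM_mem_glueM _)

lemma Glued.posM_not_mem_max (hg : Glued p α β)
    (hpair : ∃ i j : Fin b, i < j ∧ β i < β j) {s : Finset (Fin (a+1+b))}
    (hs : MaxInc ⇑p s) : posM a b ∉ s := by
  intro hM
  obtain ⟨i0, j0, hij, hb0⟩ := hpair
  have hre := hg.downR_empty_of_memM hs.1 hM
  have hcs := card_eq s
  rw [hre, if_pos hM, Finset.card_empty] at hcs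
  have h := hs.2 _ (hg.inc_glue (hg.inc_downL hs.1) (inc_pair hij hb0))
  rw [card_glue, Finset.card_pair (ne_of_lt hij)] at h
  omega

lemma Glued.maxL_of_max (hg : Glued p α β) {s : Finset (Fin (a+1+b))}
    (hs : MaxInc ⇑p s) : MaxInc ⇑α (downL s) := by
  refine ⟨hg.inc_downL hs.1, fun t₁ ht₁ => ?_⟩
  have hcs := card_eq s
  by_cases hM : posM a b ∈ s
  · have h := hs.2 _ (hg.inc_glueM ht₁)
    rw [card_glueM] at h
    rw [if_pos hM] at hcs
    rw [hg.downR_empty_of_memM hs.1 hM, Finset.card_empty] at hcs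
    omega
  · have h := hs.2 _ (hg.inc_glue ht₁ (hg.inc_downR hs.1))
    rw [card_glue] at h
    rw [if_neg hM] at hcs
    omega

lemma Glued.maxR_of_max (hg : Glued p α β)
    (hpair : ∃ i j : Fin b, i < j ∧ β i < β j) {s : Finset (Fin (a+1+b))}
    (hs : MaxInc ⇑p s) : MaxInc ⇑β (downR s) := by
  have hM := hg.posM_not_mem_max hpair hs
  have hcs := card_eq s
  rw [if_neg hM] at hcs
  refine ⟨hg.inc_downR hs.1, fun t₂ ht₂ => ?_⟩
  have h := hs.2 _ (hg.inc_glue (hg.inc_downL hs.1) ht₂)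
  rw [card_glue] at h
  omega

/-- Case where `β` has an increasing pair. -/
lemma Glued.ulis_case2 (hg : Glued p α β)
    (hpair : ∃ i j : Fin b, i < j ∧ β i < β j) :
    HasULIS ⇑p ↔ HasULIS ⇑α ∧ HasULIS ⇑β := by
  rw [hasULIS_iff, hasULIS_iff, hasULIS_iff]
  constructor
  · rintro ⟨s, hs, hu⟩
    have hM := hg.posM_not_mem_max hpair hs
    have hcs := card_eq s
    rw [if_neg hM] at hcs
    have maxL := hg.maxL_of_max hs
    have maxR := hg.maxR_of_max hpair hs
    constructor
    · refine ⟨downL s, maxL, fun t₁ ht₁ => ?_⟩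
      have hc : t₁.card = (downL s).card := le_antisymm (maxL.2 _ ht₁.1) (ht₁.2 _ maxL.1)
      have h1 : MaxInc ⇑p (glue t₁ (downR s)) := by
        refine maxinc_of_card hs (hg.inc_glue ht₁.1 (hg.inc_downR hs.1)) ?_
        rw [card_glue]; omega
      have he := hu _ h1
      calc t₁ = downL (glue t₁ (downR s)) := (downL_glue _ _).symm
        _ = downL s := by rw [he]
    · refine ⟨downR s, maxR, fun t₂ ht₂ => ?_⟩
      have hc : t₂.card = (downR s).card := le_antisymm (maxR.2 _ ht₂.1) (ht₂.2 _ maxR.1)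
      have h1 : MaxInc ⇑p (glue (downL s) t₂) := by
        refine maxinc_of_card hs (hg.inc_glue (hg.inc_downL hs.1) ht₂.1) ?_
        rw [card_glue]; omega
      have he := hu _ h1
      calc t₂ = downR (glue (downL s) t₂) := (downR_glue _ _).symm
        _ = downR s := by rw [he]
  · rintro ⟨⟨s₁, h₁, hu₁⟩, ⟨s₂, h₂, hu₂⟩⟩
    have h2card : 2 ≤ s₂.card := by
      obtain ⟨i0, j0, hij, hb0⟩ := hpair
      have h := h₂.2 _ (inc_pair hij hb0)
      rw [Finset.card_pair (ne_of_lt hij)] at h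
      omega
    have hmax : MaxInc ⇑p (glue s₁ s₂) := by
      refine ⟨hg.inc_glue h₁.1 h₂.1, fun t ht => ?_⟩
      have hdL := h₁.2 _ (hg.inc_downL ht)
      have hdR := h₂.2 _ (hg.inc_downR ht)
      have hcs := card_eq t
      rw [card_glue]
      by_cases hMt : posM a b ∈ t
      · rw [hg.downR_empty_of_memM ht hMt, Finset.card_empty, if_pos hMt] at hcs
        omega
      · rw [if_neg hMt] at hcs
        omega
    refine ⟨glue s₁ s₂, hmax, fun t ht => ?_⟩
    have hM := hg.posM_not_mem_max hpair ht
    have heL : downL t = s₁ := hu₁ _ (hg.maxL_of_max ht)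
    have heR : downR t = s₂ := hu₂ _ (hg.maxR_of_max hpair ht)
    refine set_ext ?_ ?_ ?_
    · rw [heL, downL_glue]
    · rw [heR, downR_glue]
    · simp [hM, posM_not_mem_glue]

end Glue3

end U231
namespace U231

/-! ### Pattern 231 via triples -/

lemma strictMono_vec3 {n : ℕ} {x y z : Fin n} (hxy : x < y) (hyz : y < z) :
    StrictMono ![x, y, z] := by
  intro i j hij
  fin_cases i <;> fin_cases j <;>
    first
      | exact absurd hij (by decide)
      | simpa using hxy
      | simpa using hyz
      | simpa using hxy.trans hyz

lemma contains231_of_triple {n : ℕ} (p : Equiv.Perm (Fin n)) {x y z : Fin n}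
    (hxy : x < y) (hyz : y < z) (h1 : p z < p x) (h2 : p x < p y) :
    Contains pattern231 p := by
  refine ⟨![x, y, z], strictMono_vec3 hxy hyz, ?_⟩
  intro r s
  have h3 : p z < p y := h1.trans h2
  fin_cases r <;> fin_cases s <;>
    simp only [Matrix.cons_val_zero, Matrix.cons_val_one, Matrix.head_cons,
      Matrix.cons_val_two, Matrix.tail_cons, Fin.mk_zero, Fin.mk_one] <;>
    constructor <;> intro h <;>
    first
      | exact absurd h (by decide)
      | assumption
      | exact absurd h (lt_irrefl _)
      | exact absurd h (not_lt.mpr h1.le)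
      | exact absurd h (not_lt.mpr h2.le)
      | exact absurd h (not_lt.mpr h3.le)
      | exact absurd h (lt_asymm h1)
      | exact absurd h (lt_asymm h2)
      | exact absurd h (lt_asymm h3)
      | decide

lemma triple_of_contains231 {n : ℕ} (p : Equiv.Perm (Fin n))
    (h : Contains pattern231 p) :
    ∃ x y z : Fin n, x < y ∧ y < z ∧ p z < p x ∧ p x < p y := by
  obtain ⟨f, hmono, hval⟩ := h
  refine ⟨f 0, f 1, f 2, hmono (by decide), hmono (by decide), ?_, ?_⟩
  · exact (hval 2 0).mpr (by decide)
  · exact (hval 0 1).mpr (by decide)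

lemma contains231_iff_triple {n : ℕ} (p : Equiv.Perm (Fin n)) :
    Contains pattern231 p ↔ ∃ x y z : Fin n, x < y ∧ y < z ∧ p z < p x ∧ p x < p y := by
  constructor
  · exact triple_of_contains231 p
  · rintro ⟨x, y, z, h1, h2, h3, h4⟩
    exact contains231_of_triple p h1 h2 h3 h4

section Glue4

variable {a b : ℕ} {p : Equiv.Perm (Fin (a+1+b))} {α : Equiv.Perm (Fin a)}
  {β : Equiv.Perm (Fin b)}

lemma Glued.avoids_iff (hg : Glued p α β) :
    Avoids pattern231 p ↔ Avoids pattern231 α ∧ Avoids pattern231 β := by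
  unfold Avoids
  rw [contains231_iff_triple, contains231_iff_triple, contains231_iff_triple]
  constructor
  · intro hp
    constructor
    · rintro ⟨x, y, z, h1, h2, h3, h4⟩
      refine hp ⟨posL a b x, posL a b y, posL a b z, posL_lt_posL.mpr h1,
        posL_lt_posL.mpr h2, ?_, ?_⟩ <;>
        rw [Fin.lt_def, hg.hL, hg.hL] <;> exact Fin.lt_def.mp ‹_›
    · rintro ⟨x, y, z, h1, h2, h3, h4⟩
      refine hp ⟨posR a b x, posR a b y, posR a b z, posR_lt_posR.mpr h1,
        posR_lt_posR.mpr h2, ?_, ?_⟩ <;>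
      · rw [Fin.lt_def, hg.hR, hg.hR]
        have := Fin.lt_def.mp ‹(_ : Fin b) < _›
        omega
  · rintro ⟨hα, hβ⟩ ⟨x, y, z, h1, h2, h3, h4⟩
    -- trichotomy on z
    have hvx := (p x).2
    have hvy := (p y).2
    rcases pos_trichotomy z with ⟨k, rfl⟩ | rfl | ⟨k, rfl⟩
    · -- all of x, y, z in the left block
      have hk : (posL a b k : ℕ) = (k : ℕ) := rfl
      have hxa : (x : ℕ) < a := by
        have h := Fin.lt_def.mp (h1.trans h2); have := k.2; omega
      have hya : (y : ℕ) < a := by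
        have h := Fin.lt_def.mp h2; have := k.2; omega
      have ex : posL a b ⟨(x : ℕ), hxa⟩ = x := Fin.ext rfl
      have ey : posL a b ⟨(y : ℕ), hya⟩ = y := Fin.ext rfl
      refine hα ⟨⟨(x : ℕ), hxa⟩, ⟨(y : ℕ), hya⟩, k, Fin.mk_lt_mk.mpr (Fin.lt_def.mp h1),
        ?_, ?_, ?_⟩
      · exact Fin.mk_lt_mk.mpr (Fin.lt_def.mp h2)
      · rw [Fin.lt_def, ← hg.hL, ← hg.hL, ex]
        exact Fin.lt_def.mp h3
      · rw [Fin.lt_def, ← hg.hL, ← hg.hL, ex, ey]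
        exact Fin.lt_def.mp h4
    · -- z = posM : p z is the max, contradiction
      have : (p x : ℕ) ≤ a + b := by omega
      rw [Fin.lt_def, hg.hM] at h3
      omega
    · -- z in the right block
      rw [Fin.lt_def, hg.hR] at h3
      rcases pos_trichotomy x with ⟨i, rfl⟩ | rfl | ⟨i, rfl⟩
      · -- x in left block : impossible
        rw [hg.hL] at h3
        have := (β k).2; have := (α i).2; omega
      · -- x = posM : impossible since p y > p x
        rw [Fin.lt_def, hg.hM] at h4
        omega
      · -- x in the right block
        rcases pos_trichotomy y with ⟨j, rfl⟩ | rfl | ⟨j, rfl⟩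
        · -- y left of x : impossible
          have hxy' := Fin.lt_def.mp h1
          simp only [posR, posL] at hxy'
          have := j.2; omega
        · -- y = posM : impossible
          have hxy' := Fin.lt_def.mp h1
          simp only [posR, posM] at hxy'
          omega
        · refine hβ ⟨i, j, k, posR_lt_posR.mp h1, posR_lt_posR.mp h2, ?_, ?_⟩
          · rw [Fin.lt_def]
            rw [hg.hR] at h3
            omega
          · rw [Fin.lt_def]
            have h4' := Fin.lt_def.mp h4
            rw [hg.hR, hg.hR] at h4'
            omega

end Glue4

end U231
namespace U231

section Glue5

variable {a b : ℕ} {p : Equiv.Perm (Fin (a+1+b))} {α : Equiv.Perm (Fin a)}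
  {β : Equiv.Perm (Fin b)}

lemma hasULIS_bzero {m : ℕ} (hm : m = 0) (q : Equiv.Perm (Fin m)) : HasULIS ⇑q := by
  subst hm
  have hall : ∀ t : Finset (Fin 0), t = ∅ := by
    intro t
    rw [Finset.eq_empty_iff_forall_notMem]
    exact fun j _ => j.elim0
  refine ⟨∅, ⟨inc_empty _, fun t _ => by rw [hall t]⟩, fun t _ => hall t⟩

lemma Glued.ulis_iff (hg : Glued p α β) :
    HasULIS ⇑p ↔ HasULIS ⇑α ∧ HasULIS ⇑β ∧
      (b = 0 ∨ ∃ i j : Fin b, i < j ∧ β i < β j) := by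
  by_cases hpair : ∃ i j : Fin b, i < j ∧ β i < β j
  · rw [hg.ulis_case2 hpair]
    simp [hpair]
  · by_cases hb : b = 0
    · rw [hg.ulis_case0 hb]
      simp [hb, hasULIS_bzero hb β]
    · have h1 := hg.ulis_case1 (Nat.pos_of_ne_zero hb) hpair
      simp only [hb, hpair, or_self, and_false, iff_false]
      exact h1

/-! ### Splitting an avoiding permutation with max in the middle -/

lemma small_of_avoids (hav : Avoids pattern231 p)
    (hpos : p (posM a b) = ⟨a+b, by omega⟩) :
    ∀ x : Fin (a+1+b), (x : ℕ) < a → (p x : ℕ) < a := by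
  by_contra hc
  push_neg at hc
  obtain ⟨x, hxa, hpx⟩ := hc
  classical
  set T : Finset (Fin (a+1+b)) := Finset.univ.filter (fun t => (t : ℕ) < a) with hT
  set S : Finset (Fin (a+1+b)) := Finset.univ.filter (fun t => (p t : ℕ) < a) with hS
  have hcard : S.card = T.card := by
    have he : S = T.image (fun t => p.symm t) := by
      ext t
      simp only [hS, hT, Finset.mem_image, Finset.mem_filter, Finset.mem_univ, true_and]
      constructor
      · intro h
        exact ⟨p t, h, by simp⟩
      · rintro ⟨v, hv, rfl⟩
        simpa using hv
    rw [he, Finset.card_image_of_injective _ p.symm.injective]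
  have hxT : x ∈ T := by simp [hT, hxa]
  have hxS : x ∉ S := by simp [hS]; omega
  have hns : ¬ S ⊆ T := by
    intro hsub
    have heq := Finset.eq_of_subset_of_card_le hsub (le_of_eq hcard.symm)
    rw [heq] at hxS
    exact hxS hxT
  obtain ⟨w, hwS, hwT⟩ := Finset.not_subset.mp hns
  simp only [hS, Finset.mem_filter, Finset.mem_univ, true_and] at hwS
  simp only [hT, Finset.mem_filter, Finset.mem_univ, true_and, not_lt] at hwT
  have hwa : a < (w : ℕ) := by
    rcases Nat.lt_or_ge a (w : ℕ) with h | h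
    · exact h
    · exfalso
      have : (w : ℕ) = a := by omega
      have hw : w = posM a b := Fin.ext this
      rw [hw, hpos] at hwS
      have hwS' : a + b < a := hwS
      omega
  have hpxne : p x ≠ p (posM a b) := by
    intro h
    have := p.injective h
    rw [this] at hxa
    simp [posM] at hxa
  rw [hpos] at hpxne
  have hpxval : (p x : ℕ) < a + b := by
    have h1 := (p x).2
    have h2 : (p x : ℕ) ≠ a + b := fun h => hpxne (Fin.ext h)
    omega
  refine hav (contains231_of_triple p (x := x) (y := posM a b) (z := w) ?_ ?_ ?_ ?_)
  · rw [Fin.lt_def]; exact hxa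
  · rw [Fin.lt_def]; exact hwa
  · rw [Fin.lt_def]; omega
  · rw [Fin.lt_def, hpos]; exact hpxval

lemma big_of_small (hsmall : ∀ x : Fin (a+1+b), (x : ℕ) < a → (p x : ℕ) < a)
    (hpos : p (posM a b) = ⟨a+b, by omega⟩) :
    ∀ x : Fin (a+1+b), a < (x : ℕ) → a ≤ (p x : ℕ) ∧ (p x : ℕ) < a + b := by
  intro x hx
  classical
  constructor
  · by_contra h
    push_neg at h
    set T : Finset (Fin (a+1+b)) := Finset.univ.filter (fun t => (t : ℕ) < a) with hT
    set S : Finset (Fin (a+1+b)) := Finset.univ.filter (fun t => (p t : ℕ) < a) with hS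
    have hcard : S.card = T.card := by
      have he : S = T.image (fun t => p.symm t) := by
        ext t
        simp only [hS, hT, Finset.mem_image, Finset.mem_filter, Finset.mem_univ, true_and]
        constructor
        · intro h'
          exact ⟨p t, h', by simp⟩
        · rintro ⟨v, hv, rfl⟩
          simpa using hv
      rw [he, Finset.card_image_of_injective _ p.symm.injective]
    have hsub : T ⊆ S := by
      intro t ht
      simp only [hT, Finset.mem_filter, Finset.mem_univ, true_and] at ht
      simp only [hS, Finset.mem_filter, Finset.mem_univ, true_and]
      exact hsmall t ht
    have heq := Finset.eq_of_subset_of_card_le hsub (le_of_eq hcard)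
    have hxS : x ∈ S := by simp [hS, h]
    rw [← heq] at hxS
    simp only [hT, Finset.mem_filter, Finset.mem_univ, true_and] at hxS
    omega
  · have hpxne : p x ≠ p (posM a b) := by
      intro h
      have := p.injective h
      rw [this] at hx
      simp [posM] at hx
    rw [hpos] at hpxne
    have h1 := (p x).2
    have h2 : (p x : ℕ) ≠ a + b := fun h => hpxne (Fin.ext h)
    omega

lemma exists_split (hav : Avoids pattern231 p)
    (hpos : p (posM a b) = ⟨a+b, by omega⟩) :
    ∃ (α : Equiv.Perm (Fin a)) (β : Equiv.Perm (Fin b)), Glued p α β := by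
  have hsmall := small_of_avoids hav hpos
  have hbig := big_of_small hsmall hpos
  have hbR : ∀ j : Fin b, a < (posR a b j : ℕ) := by
    intro j
    simp only [posR]
    omega
  let f : Fin a → Fin a := fun i => ⟨(p (posL a b i) : ℕ), hsmall _ i.2⟩
  have hf : Function.Injective f := by
    intro i j h
    have hv0 := congrArg Fin.val h
    have hv : (p (posL a b i) : ℕ) = (p (posL a b j) : ℕ) := hv0
    exact posL_injective (p.injective (Fin.ext hv))
  let g : Fin b → Fin b := fun j =>
    ⟨(p (posR a b j) : ℕ) - a, by have := hbig (posR a b j) (hbR j); omega⟩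
  have hgj : Function.Injective g := by
    intro i j h
    have hi := hbig (posR a b i) (hbR i)
    have hj := hbig (posR a b j) (hbR j)
    have hval : (p (posR a b i) : ℕ) = (p (posR a b j) : ℕ) := by
      have := congrArg Fin.val h
      simp only [g] at this
      omega
    exact posR_injective (p.injective (Fin.ext hval))
  refine ⟨Equiv.ofBijective f (Finite.injective_iff_bijective.mp hf),
    Equiv.ofBijective g (Finite.injective_iff_bijective.mp hgj), ?_, ?_, ?_⟩
  · intro i
    simp [Equiv.ofBijective_apply, f]
  · rw [hpos]
  · intro j
    simp only [Equiv.ofBijective_apply, g]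
    have := hbig (posR a b j) (hbR j)
    omega

lemma exists_glue (α : Equiv.Perm (Fin a)) (β : Equiv.Perm (Fin b)) :
    ∃ p : Equiv.Perm (Fin (a+1+b)), Glued p α β := by
  have hsub : ∀ x : Fin (a+1+b), ¬ (x : ℕ) < a → ¬ (x : ℕ) = a → (x : ℕ) - (a+1) < b := by
    intro x h1 h2
    have := x.2
    omega
  let f : Fin (a+1+b) → Fin (a+1+b) := fun x =>
    if h : (x : ℕ) < a then ⟨(α ⟨x, h⟩ : ℕ), by have := (α ⟨x, h⟩).2; omega⟩
    else if h' : (x : ℕ) = a then ⟨a + b, by omega⟩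
    else ⟨a + (β ⟨(x : ℕ) - (a+1), hsub x h h'⟩ : ℕ), by
      have := (β ⟨(x : ℕ) - (a+1), hsub x h h'⟩).2; omega⟩
  have hfL : ∀ (x : Fin (a+1+b)) (h : (x : ℕ) < a), ((f x) : ℕ) = α ⟨x, h⟩ := by
    intro x h
    simp only [f]
    rw [dif_pos h]
  have hfM : ∀ (x : Fin (a+1+b)), (x : ℕ) = a → ((f x) : ℕ) = a + b := by
    intro x h
    simp only [f]
    rw [dif_neg (by omega), dif_pos h]
  have hfR : ∀ (x : Fin (a+1+b)) (h1 : ¬ (x : ℕ) < a) (h2 : ¬ (x : ℕ) = a),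
      ((f x) : ℕ) = a + β ⟨(x : ℕ) - (a+1), hsub x h1 h2⟩ := by
    intro x h1 h2
    simp only [f]
    rw [dif_neg h1, dif_neg h2]
  have hf : Function.Injective f := by
    intro x y h
    have hv : ((f x) : ℕ) = ((f y) : ℕ) := congrArg Fin.val h
    apply Fin.ext
    rcases Nat.lt_trichotomy (x : ℕ) a with hx | hx | hx <;>
      rcases Nat.lt_trichotomy (y : ℕ) a with hy | hy | hy
    · -- L L
      rw [hfL x hx, hfL y hy] at hv
      have h2 := α.injective (Fin.ext hv)
      injection h2
    · rw [hfL x hx, hfM y hy] at hv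
      have := (α ⟨x, hx⟩).2; omega
    · rw [hfL x hx, hfR y (by omega) (by omega)] at hv
      have := (α ⟨x, hx⟩).2; omega
    · rw [hfM x hx, hfL y hy] at hv
      have := (α ⟨y, hy⟩).2; omega
    · omega
    · rw [hfM x hx, hfR y (by omega) (by omega)] at hv
      have := (β ⟨(y : ℕ) - (a+1), hsub y (by omega) (by omega)⟩).2; omega
    · rw [hfR x (by omega) (by omega), hfL y hy] at hv
      have := (α ⟨y, hy⟩).2; omega
    · rw [hfR x (by omega) (by omega), hfM y hy] at hv
      have := (β ⟨(x : ℕ) - (a+1), hsub x (by omega) (by omega)⟩).2; omega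
    · rw [hfR x (by omega) (by omega), hfR y (by omega) (by omega)] at hv
      have hb2 : (⟨(x : ℕ) - (a+1), _⟩ : Fin b) = ⟨(y : ℕ) - (a+1), _⟩ :=
        β.injective (Fin.ext (by omega))
      have := congrArg Fin.val hb2
      simp only at this
      omega
  refine ⟨Equiv.ofBijective f (Finite.injective_iff_bijective.mp hf), ?_, ?_, ?_⟩
  · intro i
    have hi : ((posL a b i) : ℕ) < a := i.2
    rw [Equiv.ofBijective_apply, hfL _ hi]
    have he : (⟨((posL a b i) : ℕ), hi⟩ : Fin a) = i := Fin.ext rfl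
    rw [he]
  · rw [Equiv.ofBijective_apply, hfM _ rfl]
  · intro j
    have hj := j.2
    have h1 : ¬ ((posR a b j) : ℕ) < a := by simp only [posR]; omega
    have h2 : ¬ ((posR a b j) : ℕ) = a := by simp only [posR]; omega
    rw [Equiv.ofBijective_apply, hfR _ h1 h2]
    have he : (⟨((posR a b j) : ℕ) - (a+1), hsub _ h1 h2⟩ : Fin b) = j :=
      Fin.ext (by show a + 1 + (j : ℕ) - (a+1) = (j : ℕ); omega)
    rw [he]

lemma Glued.p_unique {p' : Equiv.Perm (Fin (a+1+b))} (hg : Glued p α β)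
    (hg' : Glued p' α β) : p = p' := by
  apply Equiv.ext
  intro x
  apply Fin.ext
  rcases pos_trichotomy x with ⟨i, rfl⟩ | rfl | ⟨j, rfl⟩
  · rw [hg.hL, hg'.hL]
  · rw [hg.hM, hg'.hM]
  · rw [hg.hR, hg'.hR]

lemma Glued.ab_unique {α' : Equiv.Perm (Fin a)} {β' : Equiv.Perm (Fin b)}
    (hg : Glued p α β) (hg' : Glued p α' β') : α = α' ∧ β = β' := by
  constructor
  · apply Equiv.ext
    intro i
    apply Fin.ext
    rw [← hg.hL, ← hg'.hL]
  · apply Equiv.ext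
    intro j
    apply Fin.ext
    have h1 := hg.hR j
    have h2 := hg'.hR j
    omega

lemma Glued.pos (hg : Glued p α β) : p (posM a b) = ⟨a+b, by omega⟩ :=
  Fin.ext hg.hM

end Glue5

end U231
namespace U231

def ULtype (m : ℕ) := {p : Equiv.Perm (Fin m) // Avoids pattern231 p ∧ HasULIS ⇑p}

def Wtype (m : ℕ) := {p : Equiv.Perm (Fin m) // Avoids pattern231 p ∧ HasULIS ⇑p ∧
  (m = 0 ∨ ∃ i j : Fin m, i < j ∧ p i < p j)}

noncomputable def wNum (m : ℕ) : ℕ := Nat.card (Wtype m)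

lemma uNum_eq (m : ℕ) : uNum pattern231 m = Nat.card (ULtype m) := rfl

def Fib231 (a b : ℕ) :=
  {p : Equiv.Perm (Fin (a+1+b)) //
    (Avoids pattern231 p ∧ HasULIS ⇑p) ∧ p (posM a b) = ⟨a+b, by omega⟩}

noncomputable def fibEquiv (a b : ℕ) : Fib231 a b ≃ ULtype a × Wtype b where
  toFun x :=
    ⟨⟨(exists_split x.2.1.1 x.2.2).choose,
      ((exists_split x.2.1.1 x.2.2).choose_spec.choose_spec.avoids_iff.mp x.2.1.1).1,
      ((exists_split x.2.1.1 x.2.2).choose_spec.choose_spec.ulis_iff.mp x.2.1.2).1⟩,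
     ⟨(exists_split x.2.1.1 x.2.2).choose_spec.choose,
      ((exists_split x.2.1.1 x.2.2).choose_spec.choose_spec.avoids_iff.mp x.2.1.1).2,
      ((exists_split x.2.1.1 x.2.2).choose_spec.choose_spec.ulis_iff.mp x.2.1.2).2.1,
      ((exists_split x.2.1.1 x.2.2).choose_spec.choose_spec.ulis_iff.mp x.2.1.2).2.2⟩⟩
  invFun y :=
    ⟨(exists_glue y.1.1 y.2.1).choose,
     ⟨(exists_glue y.1.1 y.2.1).choose_spec.avoids_iff.mpr ⟨y.1.2.1, y.2.2.1⟩,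
      (exists_glue y.1.1 y.2.1).choose_spec.ulis_iff.mpr ⟨y.1.2.2, y.2.2.2.1, y.2.2.2.2⟩⟩,
     (exists_glue y.1.1 y.2.1).choose_spec.pos⟩
  left_inv x := by
    apply Subtype.ext
    exact Glued.p_unique (exists_glue _ _).choose_spec
      (exists_split x.2.1.1 x.2.2).choose_spec.choose_spec
  right_inv y := by
    have hg := (exists_glue y.1.1 y.2.1).choose_spec
    have hsplit := (exists_split ((exists_glue y.1.1 y.2.1).choose_spec.avoids_iff.mpr
      ⟨y.1.2.1, y.2.2.1⟩) (exists_glue y.1.1 y.2.1).choose_spec.pos).choose_spec.choose_spec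
    obtain ⟨h1, h2⟩ := Glued.ab_unique hsplit hg
    refine Prod.ext (Subtype.ext ?_) (Subtype.ext ?_)
    · exact h1
    · exact h2

lemma card_fib (a b : ℕ) : Nat.card (Fib231 a b) = uNum pattern231 a * wNum b := by
  rw [Nat.card_congr (fibEquiv a b), Nat.card_prod, uNum_eq, wNum]

end U231
namespace U231

lemma permCongr_finCongr_refl {n : ℕ} (p : Equiv.Perm (Fin n)) :
    (finCongr rfl).permCongr p = p := by
  apply Equiv.ext
  intro x
  simp [Equiv.permCongr_apply]

lemma avoids_congr {n n' : ℕ} (h : n = n') (p : Equiv.Perm (Fin n)) :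
    Avoids pattern231 ((finCongr h).permCongr p) ↔ Avoids pattern231 p := by
  subst h
  rw [permCongr_finCongr_refl]

lemma ulis_congr {n n' : ℕ} (h : n = n') (p : Equiv.Perm (Fin n)) :
    HasULIS ⇑((finCongr h).permCongr p) ↔ HasULIS ⇑p := by
  subst h
  rw [permCongr_finCongr_refl]

lemma card_perm_congr {n n' : ℕ} (h : n = n') (P : Equiv.Perm (Fin n') → Prop) :
    Nat.card {p : Equiv.Perm (Fin n) // P ((finCongr h).permCongr p)}
      = Nat.card {p : Equiv.Perm (Fin n') // P p} := by
  subst h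
  apply Nat.card_congr
  apply Equiv.subtypeEquivRight
  intro p
  rw [permCongr_finCongr_refl]

lemma nat_card_sigma {n : ℕ} (F : Fin n → Type*) [∀ k, Finite (F k)] :
    Nat.card (Σ k, F k) = ∑ k, Nat.card (F k) := by
  classical
  letI : ∀ k, Fintype (F k) := fun k => Fintype.ofFinite _
  rw [Nat.card_eq_fintype_card, Fintype.card_sigma]
  exact Finset.sum_congr rfl (fun k _ => (Nat.card_eq_fintype_card).symm)

lemma card_fiber_at (m : ℕ) (k : Fin (m+1)) :
    Nat.card {p : Equiv.Perm (Fin (m+1)) //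
        (Avoids pattern231 p ∧ HasULIS ⇑p) ∧ p.symm ⟨m, Nat.lt_succ_self m⟩ = k}
      = uNum pattern231 (k : ℕ) * wNum (m - (k : ℕ)) := by
  set a := (k : ℕ) with ha
  set b := m - (k : ℕ) with hb
  have h : a + 1 + b = m + 1 := by have := k.2; omega
  rw [← card_fib a b, ← card_perm_congr h (fun q =>
      (Avoids pattern231 q ∧ HasULIS ⇑q) ∧ q.symm ⟨m, Nat.lt_succ_self m⟩ = k)]
  apply Nat.card_congr
  apply Equiv.subtypeEquivRight
  intro p
  have e1 := avoids_congr h p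
  have e2 := ulis_congr h p
  have e3 : ((finCongr h).permCongr p).symm ⟨m, Nat.lt_succ_self m⟩ = k ↔
      p (posM a b) = ⟨a+b, by omega⟩ := by
    rw [Equiv.symm_apply_eq, Equiv.permCongr_apply]
    have hM : (finCongr h).symm k = posM a b := by
      apply Fin.ext
      simp [posM, ha]
    rw [hM]
    rw [Fin.ext_iff, Fin.ext_iff]
    simp only [finCongr_apply, Fin.coe_cast]
    constructor
    · intro hh; omega
    · intro hh; omega
  constructor
  · rintro ⟨⟨q1, q2⟩, q3⟩
    exact ⟨⟨e1.mp q1, e2.mp q2⟩, e3.mp q3⟩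
  · rintro ⟨⟨q1, q2⟩, q3⟩
    exact ⟨⟨e1.mpr q1, e2.mpr q2⟩, e3.mpr q3⟩


lemma uNum_step (m : ℕ) :
    uNum pattern231 (m+1) = ∑ i ∈ Finset.range (m+1), uNum pattern231 i * wNum (m - i) := by
  classical
  rw [uNum_eq]
  have e1 : ULtype (m+1) ≃
      Σ k : Fin (m+1), {p : Equiv.Perm (Fin (m+1)) //
        (Avoids pattern231 p ∧ HasULIS ⇑p) ∧ p.symm ⟨m, Nat.lt_succ_self m⟩ = k} :=
    (Equiv.sigmaFiberEquiv
        (fun q : ULtype (m+1) => (q.1).symm ⟨m, Nat.lt_succ_self m⟩)).symm.trans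
      (Equiv.sigmaCongrRight (fun k =>
        Equiv.subtypeSubtypeEquivSubtypeInter
          (fun p : Equiv.Perm (Fin (m+1)) => Avoids pattern231 p ∧ HasULIS ⇑p)
          (fun p => p.symm ⟨m, Nat.lt_succ_self m⟩ = k)))
  rw [Nat.card_congr e1, nat_card_sigma]
  rw [← Fin.sum_univ_eq_sum_range (fun i => uNum pattern231 i * wNum (m - i)) (m+1)]
  exact Finset.sum_congr rfl (fun k _ => card_fiber_at m k)

end U231
namespace U231

lemma avoids_small {n : ℕ} (hn : n ≤ 1) (p : Equiv.Perm (Fin n)) : Avoids pattern231 p := by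
  rintro ⟨f, hmono, -⟩
  have h := hmono (show (0 : Fin 3) < 1 by decide)
  have h0 := (f 0).2
  have h1 := (f 1).2
  rw [Fin.lt_def] at h
  omega

lemma hasULIS_one (p : Equiv.Perm (Fin 1)) : HasULIS ⇑p := by
  have hcard : ∀ t : Finset (Fin 1), t.card ≤ 1 := by
    intro t
    have := Finset.card_le_univ t
    simpa using this
  refine ⟨{0}, ⟨inc_singleton _ _, fun t _ => by
    rw [Finset.card_singleton]; exact hcard t⟩, ?_⟩
  rintro t ⟨htinc, hmax⟩
  have h1 : 1 ≤ t.card := by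
    have := hmax {0} (inc_singleton _ _)
    simpa using this
  have h2 := hcard t
  have : t.card = 1 := le_antisymm h2 h1
  obtain ⟨x, rfl⟩ := Finset.card_eq_one.mp this
  congr
  exact Subsingleton.elim x 0

lemma uNum_zero : uNum pattern231 0 = 1 := by
  rw [uNum_eq, Nat.card_eq_one_iff_unique]
  constructor
  · constructor
    rintro ⟨p, -⟩ ⟨q, -⟩
    apply Subtype.ext
    apply Equiv.ext
    intro x
    exact x.elim0
  · exact ⟨⟨1, avoids_small (by omega) 1, hasULIS_bzero rfl 1⟩⟩

lemma uNum_one : uNum pattern231 1 = 1 := by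
  rw [uNum_eq, Nat.card_eq_one_iff_unique]
  constructor
  · constructor
    rintro ⟨p, -⟩ ⟨q, -⟩
    apply Subtype.ext
    apply Equiv.ext
    intro x
    exact Subsingleton.elim _ _
  · exact ⟨⟨1, avoids_small (by omega) 1, hasULIS_one 1⟩⟩

lemma wNum_zero : wNum 0 = 1 := by
  rw [wNum, Nat.card_eq_one_iff_unique]
  constructor
  · constructor
    rintro ⟨p, -⟩ ⟨q, -⟩
    apply Subtype.ext
    apply Equiv.ext
    intro x
    exact x.elim0
  · exact ⟨⟨1, avoids_small (by omega) 1, hasULIS_bzero rfl 1, Or.inl rfl⟩⟩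

lemma wNum_one : wNum 1 = 0 := by
  rw [wNum]
  have : IsEmpty (Wtype 1) := by
    constructor
    rintro ⟨p, -, -, h⟩
    rcases h with h | ⟨i, j, hij, -⟩
    · exact one_ne_zero h
    · rw [Subsingleton.elim i j] at hij
      exact lt_irrefl _ hij
  exact Nat.card_of_isEmpty

lemma wNum_eq_uNum {m : ℕ} (hm : 2 ≤ m) : wNum m = uNum pattern231 m := by
  rw [wNum, uNum_eq]
  apply Nat.card_congr
  apply Equiv.subtypeEquivRight
  intro p
  constructor
  · rintro ⟨h1, h2, -⟩
    exact ⟨h1, h2⟩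
  · rintro ⟨h1, h2⟩
    refine ⟨h1, h2, Or.inr ?_⟩
    by_contra hno
    push_neg at hno
    obtain ⟨s, hs, hu⟩ := h2
    have hcard : ∀ t : Finset (Fin m), IsIncSubseq ⇑p t → t.card ≤ 1 := by
      intro t ht
      by_contra hc
      obtain ⟨i, j, hij, hinc⟩ := exists_pair_of_inc ht (by omega)
      exact absurd hinc (not_lt.mpr (hno i j hij))
    have h0 : MaxInc ⇑p {⟨0, by omega⟩} :=
      ⟨inc_singleton _ _, fun t ht => by rw [Finset.card_singleton]; exact hcard t ht⟩
    have h1' : MaxInc ⇑p {⟨1, by omega⟩} :=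
      ⟨inc_singleton _ _, fun t ht => by rw [Finset.card_singleton]; exact hcard t ht⟩
    have e0 := hu _ h0
    have e1 := hu _ h1'
    have he := Finset.singleton_injective (e0.trans e1.symm)
    have := congrArg Fin.val he
    simp at this

lemma uNum_rec (n : ℕ) (hn : 2 ≤ n) :
    uNum pattern231 n + uNum pattern231 (n - 2)
      = ∑ ab ∈ Finset.HasAntidiagonal.antidiagonal (n - 1), uNum pattern231 ab.1 * uNum pattern231 ab.2 := by
  obtain ⟨m, rfl⟩ : ∃ m, n = m + 1 := ⟨n - 1, by omega⟩
  have hm : 1 ≤ m := by omega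
  rw [Finset.Nat.sum_antidiagonal_eq_sum_range_succ_mk]
  have h1 : m + 1 - 1 = m := rfl
  rw [h1, uNum_step m]
  dsimp only
  have hmem : m - 1 ∈ Finset.range (m+1) := by
    rw [Finset.mem_range]; omega
  rw [← Finset.sum_erase_add _ _ hmem, ← Finset.sum_erase_add _ _ hmem]
  have hm1 : m - (m - 1) = 1 := by omega
  rw [hm1, wNum_one, uNum_one, mul_zero, mul_one]
  have hsum : ∑ i ∈ (Finset.range (m+1)).erase (m-1), uNum pattern231 i * wNum (m - i)
      = ∑ i ∈ (Finset.range (m+1)).erase (m-1), uNum pattern231 i * uNum pattern231 (m - i) := by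
    apply Finset.sum_congr rfl
    intro i hi
    rw [Finset.mem_erase, Finset.mem_range] at hi
    obtain ⟨hne, hlt⟩ := hi
    rcases Nat.lt_or_ge i (m - 1) with h | h
    · have : 2 ≤ m - i := by omega
      rw [wNum_eq_uNum this]
    · have : i = m := by omega
      subst this
      rw [Nat.sub_self, wNum_zero, uNum_zero]
  rw [hsum]
  have hn2 : m + 1 - 2 = m - 1 := by omega
  rw [hn2]
  omega

end U231
/-- `u_0(231) = u_1(231) = 1` and, for `n ≥ 2`,
`u_n(231) = (Σ_{a+b=n-1} u_a(231)·u_b(231)) − u_{n−2}(231)` (stated additively);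
equivalently, the generating function `U` satisfies `U = z·U·(U − z) + 1`. -/
theorem u231_recurrence :
    uNum pattern231 0 = 1 ∧ uNum pattern231 1 = 1 ∧
    (∀ n : ℕ, 2 ≤ n →
      uNum pattern231 n + uNum pattern231 (n - 2)
        = ∑ ab ∈ Finset.HasAntidiagonal.antidiagonal (n - 1), uNum pattern231 ab.1 * uNum pattern231 ab.2) ∧
    PowerSeries.mk (fun n => (uNum pattern231 n : ℚ))
      = PowerSeries.X * PowerSeries.mk (fun n => (uNum pattern231 n : ℚ)) *
          (PowerSeries.mk (fun n => (uNum pattern231 n : ℚ)) - PowerSeries.X) + 1 := by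
  refine ⟨U231.uNum_zero, U231.uNum_one, U231.uNum_rec, ?_⟩
  apply PowerSeries.ext
  intro n
  rw [mul_assoc, map_add, PowerSeries.coeff_one]
  cases n with
  | zero =>
    simp only [PowerSeries.coeff_mk, PowerSeries.coeff_zero_eq_constantCoeff, map_mul,
      PowerSeries.constantCoeff_X, zero_mul, zero_add, if_pos rfl, U231.uNum_zero,
      Nat.cast_one, if_true]
  | succ n =>
    rw [PowerSeries.coeff_mk, PowerSeries.coeff_succ_X_mul, PowerSeries.coeff_mul,
      if_neg (Nat.succ_ne_zero n), add_zero]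
    have hterm : ∀ ab : ℕ × ℕ,
        (PowerSeries.coeff (R := ℚ) ab.1) (PowerSeries.mk (fun n => (uNum pattern231 n : ℚ))) *
          (PowerSeries.coeff (R := ℚ) ab.2)
            (PowerSeries.mk (fun n => (uNum pattern231 n : ℚ)) - PowerSeries.X)
        = (uNum pattern231 ab.1 : ℚ) * (uNum pattern231 ab.2 : ℚ)
          - (uNum pattern231 ab.1 : ℚ) * (if ab.2 = 1 then 1 else 0) := by
      intro ab
      rw [map_sub, PowerSeries.coeff_mk, PowerSeries.coeff_mk, PowerSeries.coeff_X, mul_sub]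
    rw [Finset.sum_congr rfl (fun ab _ => hterm ab), Finset.sum_sub_distrib]
    rcases Nat.eq_zero_or_pos n with hn | hn
    · subst hn
      rw [Finset.Nat.antidiagonal_zero]
      simp only [Finset.sum_singleton, U231.uNum_zero, U231.uNum_one]
      norm_num
      try exact U231.uNum_one
    · have hsub : ∑ ab ∈ Finset.HasAntidiagonal.antidiagonal n,
          (uNum pattern231 ab.1 : ℚ) * (if ab.2 = 1 then 1 else 0)
          = (uNum pattern231 (n-1) : ℚ) := by
        rw [Finset.sum_eq_single_of_mem ((n-1, 1) : ℕ × ℕ)]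
        · rw [if_pos rfl, mul_one]
        · rw [Finset.HasAntidiagonal.mem_antidiagonal]; omega
        · rintro ⟨x, y⟩ hmem hne
          rw [Finset.HasAntidiagonal.mem_antidiagonal] at hmem
          rcases eq_or_ne y 1 with hy | hy
          · exfalso
            apply hne
            subst hy
            have : x = n - 1 := by omega
            subst this; rfl
          · rw [if_neg hy, mul_zero]
      rw [hsub]
      have hrec := U231.uNum_rec (n+1) (by omega)
      have hn2 : n + 1 - 2 = n - 1 := by omega
      rw [hn2, Finset.Nat.sum_antidiagonal_eq_sum_range_succ_mk] at hrec
      rw [Finset.Nat.sum_antidiagonal_eq_sum_range_succ_mk]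
      have hcast := congrArg (fun t : ℕ => (t : ℚ)) hrec
      push_cast at hcast ⊢
      linarith
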